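/- Let q be a prime power, k ≥ 1, N a positive integer with N dividing q^k − 1, and n = (q^k − 1)/N, with gcd(n,q) = 1. Let C be an irreducible cyclic code of length n and dimension k over F_q whose check polynomial h has period n. Then the number of distinct nonzero weights s of C satisfies s ≤ N. -/

import Mathlib

open Polynomial

/-- Hamming weight: the number of nonzero coordinates. -/
noncomputable def hwt {ι F : Type*} [Zero F] (c : ι → F) : ℕ := Set.ncard {i | c i ≠ 0}

noncomputable def pw {F : Type*} [Semiring F] (n : ℕ) (c : ZMod n → F) : F[X] :=
  ∑ i ∈ Finset.range n, Polynomial.C (c (i : ZMod n)) * X ^ i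

def shf {n : ℕ} {F : Type*} (c : ZMod n → F) : ZMod n → F := fun i => c (i - 1)

lemma pw_coeff {F : Type*} [Semiring F] (n : ℕ) (c : ZMod n → F) (j : ℕ) :
    (pw n c).coeff j = if j < n then c (j : ZMod n) else 0 := by
  unfold pw
  rw [Polynomial.finset_sum_coeff]
  simp only [coeff_C_mul, coeff_X_pow, mul_ite, mul_one, mul_zero]
  simp [Finset.sum_ite_eq, Finset.mem_range]

lemma pw_inj {F : Type*} [Semiring F] (n : ℕ) [NeZero n] (c c' : ZMod n → F)
    (hcc : pw n c = pw n c') : c = c' := by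
  funext i
  have h1 := congrArg (fun p => Polynomial.coeff p i.val) hcc
  simp only [pw_coeff, ZMod.val_lt i, if_pos] at h1
  simpa using h1

lemma pw_natDegree_lt {F : Type*} [Semiring F] (n : ℕ) (hn : 0 < n) (c : ZMod n → F) :
    (pw n c).natDegree ≤ n - 1 := by
  rw [Polynomial.natDegree_le_iff_coeff_eq_zero]
  intro j hj
  rw [pw_coeff, if_neg]
  omega

lemma pw_shf {F : Type*} [CommRing F] (n : ℕ) (hn : 0 < n) (c : ZMod n → F) :
    pw n (shf c) = X * pw n c - Polynomial.C (c (-1)) * (X ^ n - 1) := by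
  obtain ⟨m, rfl⟩ : ∃ m, n = m + 1 := ⟨n - 1, by omega⟩
  have hm : ((m : ℕ) : ZMod (m+1)) = -1 := by
    have h0 : ((m+1 : ℕ) : ZMod (m+1)) = 0 := ZMod.natCast_self _
    push_cast at h0
    linear_combination h0
  unfold pw shf
  rw [Finset.sum_range_succ' (fun i => Polynomial.C (c ((i : ZMod (m+1)) - 1)) * X ^ i)]
  rw [Finset.mul_sum, Finset.sum_range_succ (fun i => X * (Polynomial.C (c (i : ZMod (m+1))) * X ^ i))]
  have hcast : ∀ i : ℕ, (((i+1 : ℕ) : ZMod (m+1)) - 1) = ((i : ℕ) : ZMod (m+1)) := by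
    intro i; push_cast; ring
  have hterm : ∀ i : ℕ, X * (Polynomial.C (c ((i : ℕ) : ZMod (m+1))) * X ^ i)
      = Polynomial.C (c ((i : ℕ) : ZMod (m+1))) * X ^ (i+1) := fun i => by ring
  simp only [hcast, hterm, Nat.cast_zero, zero_sub, hm]
  ring

lemma pw_shf_iter {F : Type*} [CommRing F] (n : ℕ) (hn : 0 < n) (c : ZMod n → F) (t : ℕ) :
    (X ^ n - 1 : F[X]) ∣ pw n (shf^[t] c) - X ^ t * pw n c := by
  induction t with
  | zero => simp
  | succ t ih =>
    rw [Function.iterate_succ_apply', pw_shf n hn]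
    obtain ⟨u, hu⟩ := ih
    refine ⟨X * u - Polynomial.C ((shf^[t] c) (-1)), ?_⟩
    have : pw n (shf^[t] c) = X ^ t * pw n c + (X ^ n - 1) * u := by linear_combination hu
    rw [this]
    ring

lemma shf_zero {n : ℕ} {F : Type*} [Zero F] : shf (0 : ZMod n → F) = 0 := rfl

lemma hwt_shf {n : ℕ} {F : Type*} [Zero F] (c : ZMod n → F) : hwt (shf c) = hwt c := by
  unfold hwt shf
  have : {i : ZMod n | c (i - 1) ≠ 0} = (fun i => i + 1) '' {i : ZMod n | c i ≠ 0} := by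
    ext i
    simp only [Set.mem_image, Set.mem_setOf_eq]
    constructor
    · intro hi; exact ⟨i - 1, hi, by ring⟩
    · rintro ⟨j, hj, rfl⟩; simpa using hj
  rw [this, Set.ncard_image_of_injective _ (add_left_injective 1)]

lemma hwt_shf_iter {n : ℕ} {F : Type*} [Zero F] (c : ZMod n → F) (t : ℕ) :
    hwt (shf^[t] c) = hwt c := by
  induction t with
  | zero => rfl
  | succ t ih => rw [Function.iterate_succ_apply', hwt_shf, ih]

lemma shf_injective {n : ℕ} {F : Type*} : Function.Injective (shf (n := n) (F := F)) := by
  intro a b hab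
  funext i
  have := congrFun hab (i + 1)
  simpa [shf] using this

/-- Let `q` be a prime power (the cardinality of the finite field `F`), `k ≥ 1`,
`N ∣ q^k - 1`, `n = (q^k - 1)/N` and `gcd(n,q) = 1`.  If `C` is an irreducible cyclic
code of length `n` and dimension `k` over `F` (i.e. `C` consists of the words whose
associated polynomials are multiples of the generator `g`, where `g·h = x^n - 1`
and the check polynomial `h` is irreducible of degree `k`) whose check polynomial
has period `n`, then the number `s` of distinct nonzero weights of `C` is at most `N`. -/
theorem stmt5 {F : Type*} [Field F] [Fintype F]
    (q : ℕ) (hq : q = Fintype.card F)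
    (k N n : ℕ) (hk : 1 ≤ k) (hN : 0 < N) (hNdvd : N ∣ q ^ k - 1)
    (hn : n = (q ^ k - 1) / N) (hcop : Nat.Coprime n q)
    (g h : F[X]) (hmonic : g.Monic) (hirr : Irreducible h)
    (hgh : g * h = X ^ n - 1) (hdeg : h.natDegree = k)
    (hper : IsLeast {T : ℕ | 0 < T ∧ h ∣ X ^ T - 1} n)
    (C : Set (ZMod n → F))
    (hC : C = {c : ZMod n → F |
      g ∣ ∑ i ∈ Finset.range n, Polynomial.C (c (i : ZMod n)) * X ^ i})
    (s : ℕ) (hs : s = Set.ncard {w : ℕ | ∃ c ∈ C, c ≠ 0 ∧ hwt c = w}) :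
    s ≤ N := by
  classical
  have hn0 : 0 < n := hper.1.1
  haveI : NeZero n := ⟨hn0.ne'⟩
  have hnN : n * N = q ^ k - 1 := by rw [hn]; exact Nat.div_mul_cancel hNdvd
  have hmem : ∀ c : ZMod n → F, c ∈ C ↔ g ∣ pw n c := by
    intro c; rw [hC]; rfl
  have hg0 : g ≠ 0 := hmonic.ne_zero
  have hh0 : h ≠ 0 := hirr.ne_zero
  have hdvdXn : g ∣ (X ^ n - 1 : F[X]) := ⟨h, hgh.symm⟩
  have hsum : g.natDegree + k = n := by
    have h1 : (g * h).natDegree = n := by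
      rw [hgh, ← Polynomial.C_1, Polynomial.natDegree_X_pow_sub_C]
    rw [Polynomial.natDegree_mul hg0 hh0, hdeg] at h1
    exact h1
  have hpw0 : pw n (0 : ZMod n → F) = 0 := by simp [pw]
  have hCmem_shf : ∀ c, c ∈ C → shf c ∈ C := by
    intro c hc
    rw [hmem] at hc ⊢
    rw [pw_shf n hn0]
    exact dvd_sub (hc.mul_left X) (hdvdXn.mul_left _)
  have hCmem_iter : ∀ c, c ∈ C → ∀ t, shf^[t] c ∈ C := by
    intro c hc t
    induction t with
    | zero => exact hc
    | succ t ih => rw [Function.iterate_succ_apply']; exact hCmem_shf _ ih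
  have hnofix : ∀ c ∈ C, c ≠ 0 → ∀ d, 0 < d → d < n → shf^[d] c ≠ c := by
    intro c hc hc0 d hd0 hdn hfix
    obtain ⟨a, ha⟩ := (hmem c).1 hc
    have ha0 : a ≠ 0 := by
      rintro rfl
      exact hc0 (pw_inj n _ _ (by rw [ha, mul_zero, hpw0]))
    have hdvd1 : (X ^ n - 1 : F[X]) ∣ (X ^ d - 1) * pw n c := by
      obtain ⟨u, hu⟩ := pw_shf_iter n hn0 c d
      rw [hfix] at hu
      exact ⟨-u, by linear_combination -hu⟩
    have hdvd2 : h ∣ (X ^ d - 1) * a := by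
      have h2 : g * h ∣ g * ((X ^ d - 1) * a) := by
        rw [hgh]
        calc (X ^ n - 1 : F[X]) ∣ (X ^ d - 1) * pw n c := hdvd1
        _ = g * ((X ^ d - 1) * a) := by rw [ha]; ring
      exact (mul_dvd_mul_iff_left hg0).mp h2
    rcases hirr.prime.2.2 _ _ hdvd2 with hd | hd
    · exact absurd (hper.2 ⟨hd0, hd⟩) (by omega)
    · have h1 : h.natDegree ≤ a.natDegree := Polynomial.natDegree_le_of_dvd hd ha0
      have h2 : g.natDegree + a.natDegree ≤ n - 1 := by
        rw [← Polynomial.natDegree_mul hg0 ha0, ← ha]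
        exact pw_natDegree_lt n hn0 c
      omega
  have hiter_inj : ∀ c ∈ C, c ≠ 0 → ∀ t1 t2, t1 < n → t2 < n →
      shf^[t1] c = shf^[t2] c → t1 = t2 := by
    intro c hc hc0 t1 t2 h1 h2 heq
    by_contra hne
    wlog hlt : t1 < t2 generalizing t1 t2
    · exact this t2 t1 h2 h1 heq.symm (Ne.symm hne) (by omega)
    have hfix : shf^[t2 - t1] c = c := by
      apply Function.Injective.iterate shf_injective t1
      rw [← Function.iterate_add_apply, show t1 + (t2 - t1) = t2 by omega]
      exact heq.symm
    exact hnofix c hc hc0 (t2 - t1) (by omega) (by omega) hfix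
  have hwt_le : ∀ c : ZMod n → F, hwt c ≤ n := by
    intro c
    have h1 : hwt c ≤ Set.ncard (Set.univ : Set (ZMod n)) :=
      Set.ncard_le_ncard (Set.subset_univ _) Set.finite_univ
    simpa [Set.ncard_univ, Nat.card_eq_fintype_card, ZMod.card] using h1
  have hdivmul : ∀ c ∈ C, g * (pw n c /ₘ g) = pw n c := by
    intro c hc
    have hmod : pw n c %ₘ g = 0 :=
      (Polynomial.modByMonic_eq_zero_iff_dvd hmonic).mpr ((hmem c).1 hc)
    have h1 := Polynomial.modByMonic_add_div (pw n c) g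
    rw [hmod, zero_add] at h1
    exact h1
  have hdivdeg : ∀ c ∈ C, c ≠ 0 → (pw n c /ₘ g).natDegree < k := by
    intro c hc hc0
    set a := pw n c /ₘ g with hadef
    have ha : pw n c = g * a := (hdivmul c hc).symm
    have ha0 : a ≠ 0 := by
      rintro h0
      exact hc0 (pw_inj n _ _ (by rw [ha, h0, mul_zero, hpw0]))
    have h2 : g.natDegree + a.natDegree ≤ n - 1 := by
      rw [← Polynomial.natDegree_mul hg0 ha0, ← ha]
      exact pw_natDegree_lt n hn0 c
    omega
  set T : Finset (ZMod n → F) := Finset.univ.filter (fun c => c ∈ C ∧ c ≠ 0) with hT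
  have hTcard : T.card ≤ q ^ k - 1 := by
    have hle : T.card ≤ (Finset.univ.erase (0 : Fin k → F)).card := by
      apply Finset.card_le_card_of_injOn (fun c (i : Fin k) => (pw n c /ₘ g).coeff i)
      · intro c hcT
        simp only [hT, Finset.mem_coe, Finset.mem_filter, Finset.mem_univ, true_and] at hcT
        obtain ⟨hcC, hc0⟩ := hcT
        rw [Finset.mem_coe, Finset.mem_erase]
        refine ⟨?_, Finset.mem_univ _⟩
        intro h0
        have ha0 : pw n c /ₘ g = 0 := by
          ext j
          rw [Polynomial.coeff_zero]
          by_cases hj : j < k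
          · exact congrFun h0 ⟨j, hj⟩
          · exact Polynomial.coeff_eq_zero_of_natDegree_lt
              (lt_of_lt_of_le (hdivdeg c hcC hc0) (by omega))
        exact hc0 (pw_inj n _ _ (by rw [← hdivmul c hcC, ha0, mul_zero, hpw0]))
      · intro c1 h1 c2 h2 hf
        simp only [hT, Finset.coe_filter, Set.mem_setOf_eq, Finset.mem_univ, true_and] at h1 h2
        have haeq : pw n c1 /ₘ g = pw n c2 /ₘ g := by
          ext j
          by_cases hj : j < k
          · exact congrFun hf ⟨j, hj⟩
          · rw [Polynomial.coeff_eq_zero_of_natDegree_lt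
                (lt_of_lt_of_le (hdivdeg c1 h1.1 h1.2) (by omega)),
              Polynomial.coeff_eq_zero_of_natDegree_lt
                (lt_of_lt_of_le (hdivdeg c2 h2.1 h2.2) (by omega))]
        exact pw_inj n _ _ (by rw [← hdivmul c1 h1.1, ← hdivmul c2 h2.1, haeq])
    have hcard : (Finset.univ.erase (0 : Fin k → F)).card = q ^ k - 1 := by
      rw [Finset.card_erase_of_mem (Finset.mem_univ _), Finset.card_univ,
        Fintype.card_fun, Fintype.card_fin, hq]
    omega
  set Wfin : Finset ℕ := (Finset.range (n+1)).filter (fun w => ∃ c ∈ C, c ≠ 0 ∧ hwt c = w)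
    with hWfin
  have hsW : s = Wfin.card := by
    rw [hs]
    have hset : {w : ℕ | ∃ c ∈ C, c ≠ 0 ∧ hwt c = w} = ↑Wfin := by
      ext w
      simp only [hWfin, Finset.coe_filter, Finset.mem_range, Set.mem_setOf_eq]
      constructor
      · rintro ⟨c, hc, hc0, rfl⟩
        exact ⟨by have := hwt_le c; omega, c, hc, hc0, rfl⟩
      · rintro ⟨-, hx⟩; exact hx
    rw [hset, Set.ncard_coe_finset]
  have hrep : ∀ w ∈ Wfin, ∃ c, c ∈ C ∧ c ≠ 0 ∧ hwt c = w := by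
    intro w hw
    simp only [hWfin, Finset.mem_filter] at hw
    obtain ⟨-, c, hc, hc0, hcw⟩ := hw
    exact ⟨c, hc, hc0, hcw⟩
  set rep : ℕ → (ZMod n → F) :=
    fun w => if hw : ∃ c, c ∈ C ∧ c ≠ 0 ∧ hwt c = w then hw.choose else 0 with hrepdef
  have hrepP : ∀ w ∈ Wfin, rep w ∈ C ∧ rep w ≠ 0 ∧ hwt (rep w) = w := by
    intro w hw
    have hex : ∃ c, c ∈ C ∧ c ≠ 0 ∧ hwt c = w := hrep w hw
    simp only [hrepdef, dif_pos hex]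
    exact hex.choose_spec
  have hlower : Wfin.card * n ≤ T.card := by
    have hcard : (Wfin ×ˢ Finset.range n).card = Wfin.card * n := by
      rw [Finset.card_product, Finset.card_range]
    rw [← hcard]
    apply Finset.card_le_card_of_injOn (fun p : ℕ × ℕ => shf^[p.2] (rep p.1))
    · rintro ⟨w, t⟩ hp
      rw [Finset.mem_coe, Finset.mem_product, Finset.mem_range] at hp
      obtain ⟨hw, ht⟩ := hp
      obtain ⟨hc1, hc2, hc3⟩ := hrepP w hw
      simp only [hT, Finset.mem_coe, Finset.mem_filter, Finset.mem_univ, true_and]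
      refine ⟨hCmem_iter _ hc1 t, ?_⟩
      intro h0
      have hz : shf^[t] (0 : ZMod n → F) = 0 := Function.iterate_fixed shf_zero t
      exact hc2 ((Function.Injective.iterate shf_injective t) (h0.trans hz.symm))
    · rintro ⟨w1, t1⟩ hp1 ⟨w2, t2⟩ hp2 hfe
      rw [Finset.mem_coe, Finset.mem_product, Finset.mem_range] at hp1 hp2
      obtain ⟨hw1, ht1⟩ := hp1
      obtain ⟨hw2, ht2⟩ := hp2
      obtain ⟨hc1, hc2, hc3⟩ := hrepP w1 hw1
      obtain ⟨hd1, hd2, hd3⟩ := hrepP w2 hw2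
      simp only at hfe
      have hww : w1 = w2 := by
        rw [← hc3, ← hd3, ← hwt_shf_iter (rep w1) t1, ← hwt_shf_iter (rep w2) t2, hfe]
      subst hww
      have htt : t1 = t2 := hiter_inj (rep w1) hc1 hc2 t1 t2 ht1 ht2 hfe
      simp [htt]
  rw [hsW]
  have hfinal : Wfin.card * n ≤ N * n := by
    calc Wfin.card * n ≤ T.card := hlower
    _ ≤ q ^ k - 1 := hTcard
    _ = n * N := hnN.symm
    _ = N * n := mul_comm n N
  exact Nat.le_of_mul_le_mul_right hfinal hn0
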